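/- Let R be a commutative ring and let M, N, N', P be ℤ-graded R-modules. Suppose f₀ : M → N, g₀ : N → P, f₀' : M → N', g₀' : N' → P are homogeneous R-linear maps of degree 0, and f₁ : M → N, g₁ : N → P, f₁' : M → N', g₁' : N' → P are homogeneous R-linear maps of degree −1. If (g₀ + g₁) ∘ (f₀ + f₁) = (g₀' + g₁') ∘ (f₀' + f₁'), then for every λ ∈ R one has (g₀ + λ·g₁) ∘ (f₀ + λ·f₁) = (g₀' + λ·g₁') ∘ (f₀' + λ·f₁'). -/

import Mathlib

set_option maxHeartbeats 1000000
set_option synthInstance.maxHeartbeats 1000000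
set_option maxRecDepth 8000

lemma indep3_aux {R P : Type*} [CommRing R] [AddCommGroup P] [Module R P]
    (𝓟 : ℤ → Submodule R P) (hP : DirectSum.IsInternal 𝓟) {i : ℤ}
    {a b c : P} (ha : a ∈ 𝓟 i) (hb : b ∈ 𝓟 (i - 1)) (hc : c ∈ 𝓟 (i - 2))
    (h : a + b + c = 0) : a = 0 ∧ b = 0 ∧ c = 0 := by
  let d : DirectSum ℤ (fun j => 𝓟 j) :=
    DirectSum.of (fun j => 𝓟 j) i ⟨a, ha⟩ + DirectSum.of (fun j => 𝓟 j) (i - 1) ⟨b, hb⟩ +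
      DirectSum.of (fun j => 𝓟 j) (i - 2) ⟨c, hc⟩
  have hmap : DirectSum.coeAddMonoidHom 𝓟 d = 0 := by
    show DirectSum.coeAddMonoidHom 𝓟 (_ + _ + _) = 0
    rw [map_add, map_add, DirectSum.coeAddMonoidHom_of, DirectSum.coeAddMonoidHom_of,
      DirectSum.coeAddMonoidHom_of]
    exact h
  have hd0 : d = 0 := hP.injective (by simpa using hmap)
  have h1 : i - 1 ≠ i := by omega
  have h2 : i - 2 ≠ i := by omega
  have h3 : i ≠ i - 1 := by omega
  have h4 : i - 2 ≠ i - 1 := by omega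
  have h5 : i ≠ i - 2 := by omega
  have h6 : i - 1 ≠ i - 2 := by omega
  refine ⟨?_, ?_, ?_⟩
  · have hh := DFunLike.congr_fun hd0 i
    rw [show d = _ + _ + _ from rfl, DirectSum.add_apply, DirectSum.add_apply,
      DirectSum.of_eq_same, DirectSum.of_eq_of_ne _ _ _ h3, DirectSum.of_eq_of_ne _ _ _ h5,
      DirectSum.zero_apply, add_zero, add_zero] at hh
    exact congrArg Subtype.val hh
  · have hh := DFunLike.congr_fun hd0 (i - 1)
    rw [show d = _ + _ + _ from rfl, DirectSum.add_apply, DirectSum.add_apply,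
      DirectSum.of_eq_same, DirectSum.of_eq_of_ne _ _ _ h1, DirectSum.of_eq_of_ne _ _ _ h6,
      DirectSum.zero_apply, zero_add, add_zero] at hh
    exact congrArg Subtype.val hh
  · have hh := DFunLike.congr_fun hd0 (i - 2)
    rw [show d = _ + _ + _ from rfl, DirectSum.add_apply, DirectSum.add_apply,
      DirectSum.of_eq_same, DirectSum.of_eq_of_ne _ _ _ h2, DirectSum.of_eq_of_ne _ _ _ h4,
      DirectSum.zero_apply, zero_add, zero_add] at hh
    exact congrArg Subtype.val hh

/-- Let `M, N, N', P` be ℤ-graded `R`-modules (internal direct sums of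
the submodules `𝓜 i`, `𝓝 i`, `𝓝' i`, `𝓟 i`).  Suppose `f₀, g₀, f₀', g₀'` are homogeneous
of degree `0` and `f₁, g₁, f₁', g₁'` are homogeneous of degree `-1` as indicated.  If
`(g₀ + g₁) ∘ (f₀ + f₁) = (g₀' + g₁') ∘ (f₀' + f₁')`, then for every `λ ∈ R`,
`(g₀ + λ•g₁) ∘ (f₀ + λ•f₁) = (g₀' + λ•g₁') ∘ (f₀' + λ•f₁')`. -/
theorem deformation_commutativity_from_lambda_one
    (R M N N' P : Type*) [CommRing R]
    [AddCommGroup M] [Module R M] [AddCommGroup N] [Module R N]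
    [AddCommGroup N'] [Module R N'] [AddCommGroup P] [Module R P]
    (𝓜 : ℤ → Submodule R M) (𝓝 : ℤ → Submodule R N)
    (𝓝' : ℤ → Submodule R N') (𝓟 : ℤ → Submodule R P)
    (hM : DirectSum.IsInternal 𝓜) (hN : DirectSum.IsInternal 𝓝)
    (hN' : DirectSum.IsInternal 𝓝') (hP : DirectSum.IsInternal 𝓟)
    (f₀ f₁ : M →ₗ[R] N) (g₀ g₁ : N →ₗ[R] P)
    (f₀' f₁' : M →ₗ[R] N') (g₀' g₁' : N' →ₗ[R] P)
    (hf₀ : ∀ (i : ℤ), ∀ x ∈ 𝓜 i, f₀ x ∈ 𝓝 i)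
    (hf₁ : ∀ (i : ℤ), ∀ x ∈ 𝓜 i, f₁ x ∈ 𝓝 (i - 1))
    (hg₀ : ∀ (i : ℤ), ∀ x ∈ 𝓝 i, g₀ x ∈ 𝓟 i)
    (hg₁ : ∀ (i : ℤ), ∀ x ∈ 𝓝 i, g₁ x ∈ 𝓟 (i - 1))
    (hf₀' : ∀ (i : ℤ), ∀ x ∈ 𝓜 i, f₀' x ∈ 𝓝' i)
    (hf₁' : ∀ (i : ℤ), ∀ x ∈ 𝓜 i, f₁' x ∈ 𝓝' (i - 1))
    (hg₀' : ∀ (i : ℤ), ∀ x ∈ 𝓝' i, g₀' x ∈ 𝓟 i)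
    (hg₁' : ∀ (i : ℤ), ∀ x ∈ 𝓝' i, g₁' x ∈ 𝓟 (i - 1))
    (h : (g₀ + g₁).comp (f₀ + f₁) = (g₀' + g₁').comp (f₀' + f₁')) :
    ∀ lam : R,
      (g₀ + lam • g₁).comp (f₀ + lam • f₁) = (g₀' + lam • g₁').comp (f₀' + lam • f₁') := by
  intro lam
  set L := (g₀ + lam • g₁).comp (f₀ + lam • f₁) with hL
  set L' := (g₀' + lam • g₁').comp (f₀' + lam • f₁') with hL'
  have key : ∀ i : ℤ, ∀ x ∈ 𝓜 i, L x = L' x := by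
    intro i x hx
    have hx1 := LinearMap.congr_fun h x
    simp only [LinearMap.comp_apply, LinearMap.add_apply, map_add] at hx1
    have ha : g₀ (f₀ x) - g₀' (f₀' x) ∈ 𝓟 i :=
      sub_mem (hg₀ i _ (hf₀ i x hx)) (hg₀' i _ (hf₀' i x hx))
    have hb : (g₀ (f₁ x) + g₁ (f₀ x)) - (g₀' (f₁' x) + g₁' (f₀' x)) ∈ 𝓟 (i - 1) :=
      sub_mem (add_mem (hg₀ (i - 1) _ (hf₁ i x hx)) (hg₁ i _ (hf₀ i x hx)))
        (add_mem (hg₀' (i - 1) _ (hf₁' i x hx)) (hg₁' i _ (hf₀' i x hx)))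
    have hc : g₁ (f₁ x) - g₁' (f₁' x) ∈ 𝓟 (i - 2) := by
      have h1 := hg₁ (i - 1) _ (hf₁ i x hx)
      have h2 := hg₁' (i - 1) _ (hf₁' i x hx)
      rw [show i - 1 - 1 = i - 2 by omega] at h1 h2
      exact sub_mem h1 h2
    have hsum : (g₀ (f₀ x) - g₀' (f₀' x)) +
        ((g₀ (f₁ x) + g₁ (f₀ x)) - (g₀' (f₁' x) + g₁' (f₀' x))) +
        (g₁ (f₁ x) - g₁' (f₁' x)) = 0 := by
      have := sub_eq_zero_of_eq hx1
      rw [← this]; abel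
    obtain ⟨ea, eb, ec⟩ := indep3_aux 𝓟 hP ha hb hc hsum
    have e1 : g₀ (f₀ x) = g₀' (f₀' x) := sub_eq_zero.mp ea
    have e2 : g₀ (f₁ x) + g₁ (f₀ x) = g₀' (f₁' x) + g₁' (f₀' x) := sub_eq_zero.mp eb
    have e3 : g₁ (f₁ x) = g₁' (f₁' x) := sub_eq_zero.mp ec
    calc L x = g₀ (f₀ x) + lam • (g₀ (f₁ x) + g₁ (f₀ x)) + (lam * lam) • g₁ (f₁ x) := by
          simp only [hL, LinearMap.comp_apply, LinearMap.add_apply, LinearMap.smul_apply,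
            map_add, map_smul, smul_add, smul_smul]
          abel
      _ = g₀' (f₀' x) + lam • (g₀' (f₁' x) + g₁' (f₀' x)) + (lam * lam) • g₁' (f₁' x) := by
          rw [e1, e2, e3]
      _ = L' x := by
          simp only [hL', LinearMap.comp_apply, LinearMap.add_apply, LinearMap.smul_apply,
            map_add, map_smul, smul_add, smul_smul]
          abel
  have hker : ∀ i : ℤ, 𝓜 i ≤ LinearMap.ker (L - L') := by
    intro i x hx
    simp only [LinearMap.mem_ker, LinearMap.sub_apply, sub_eq_zero]
    exact key i x hx
  have htop : (⊤ : Submodule R M) ≤ LinearMap.ker (L - L') := by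
    rw [← hM.submodule_iSup_eq_top]
    exact iSup_le hker
  have : L - L' = 0 := LinearMap.ker_eq_top.mp (top_le_iff.mp htop)
  exact sub_eq_zero.mp this
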